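/- Let σ = 1024/(2835·π³), let t be real, and let V(R) = 1/(2R²) + R²/2 + σ·t/R³ on (0, ∞). If R₀ > 0 satisfies V′(R₀) = 0, then 4 + 3·σ·t/R₀⁵ = 5 − 1/R₀⁴. That is, the sum-rule breathing-mode prediction ω₀^B = √(4 + 3σ·k_fγ/R_min⁵) agrees exactly with the hyperspherical prediction ω₀^B = √(5 − 1/R_min⁴) at any stationary point of the effective potential. -/
import Mathlib

/-- Agreement of the sum-rule and hyperspherical breathing-mode predictions:
with `σ = 1024/(2835π³)` and `V(R) = 1/(2R²) + R²/2 + σt/R³`, if `R₀ > 0` and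
`V′(R₀) = 0` then `4 + 3σt/R₀⁵ = 5 − 1/R₀⁴`. -/
theorem sum_rule_agrees_with_curvature (σ t : ℝ) (hσ : σ = 1024 / (2835 * Real.pi ^ 3))
    (V : ℝ → ℝ) (hV : ∀ R : ℝ, V R = 1 / (2 * R ^ 2) + R ^ 2 / 2 + σ * t / R ^ 3)
    (R₀ : ℝ) (hR₀ : 0 < R₀) (hstat : deriv V R₀ = 0) :
    4 + 3 * σ * t / R₀ ^ 5 = 5 - 1 / R₀ ^ 4 := by
  have hx : R₀ ≠ 0 := ne_of_gt hR₀
  have h2x : (2 : ℝ) * R₀ ^ 2 ≠ 0 := by positivity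
  have h3x : R₀ ^ 3 ≠ 0 := pow_ne_zero _ hx
  have h1 : HasDerivAt (fun x : ℝ => 1 / (2 * x ^ 2))
      ((0 * (2 * R₀ ^ 2) - 1 * (2 * (↑2 * R₀ ^ 1))) / (2 * R₀ ^ 2) ^ 2) R₀ :=
    (hasDerivAt_const R₀ (1 : ℝ)).div ((hasDerivAt_pow 2 R₀).const_mul 2) h2x
  have h2 : HasDerivAt (fun x : ℝ => x ^ 2 / 2) ((↑2 * R₀ ^ 1) / 2) R₀ :=
    (hasDerivAt_pow 2 R₀).div_const 2
  have h3 : HasDerivAt (fun x : ℝ => σ * t / x ^ 3)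
      ((0 * R₀ ^ 3 - σ * t * (↑3 * R₀ ^ 2)) / (R₀ ^ 3) ^ 2) R₀ :=
    (hasDerivAt_const R₀ (σ * t)).div (hasDerivAt_pow 3 R₀) h3x
  have hVd : HasDerivAt V
      ((0 * (2 * R₀ ^ 2) - 1 * (2 * (↑2 * R₀ ^ 1))) / (2 * R₀ ^ 2) ^ 2
        + (↑2 * R₀ ^ 1) / 2
        + (0 * R₀ ^ 3 - σ * t * (↑3 * R₀ ^ 2)) / (R₀ ^ 3) ^ 2) R₀ := by
    have := (h1.add h2).add h3
    have hfe : V = fun x : ℝ => 1 / (2 * x ^ 2) + x ^ 2 / 2 + σ * t / x ^ 3 :=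
      funext hV
    rw [hfe]; exact this
  have hd := hVd.deriv
  rw [hstat] at hd
  have key : (0 * (2 * R₀ ^ 2) - 1 * (2 * (↑2 * R₀ ^ 1))) / (2 * R₀ ^ 2) ^ 2
        + (↑2 * R₀ ^ 1) / 2
        + (0 * R₀ ^ 3 - σ * t * (↑3 * R₀ ^ 2)) / (R₀ ^ 3) ^ 2 = 0 := hd.symm
  push_cast at key
  field_simp at key ⊢
  nlinarith [key, sq_nonneg R₀, pow_pos hR₀ 2, pow_pos hR₀ 4]
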